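/- For all real numbers a > 0 and κ ≥ 0 there exists a constant C > 0 such that for every t > 0 and every ξ ∈ ℝ: ∫₀^∞ (1+s)^κ · s^{a + 1/2} · (t² + ξ²t²)^{-(a/2 + 3/4)} · exp(-s/(4t(1+ξ²))) ds ≤ C · (1+t)^κ · (1+ξ²)^{a/2 + κ + 3/4}. -/

import Mathlib

open MeasureTheory Real

/-- The final quantitative integral estimate in the proof of Theorem 1.1 i):
for `a > 0`, `κ ≥ 0` there is `C > 0` such that for all `t > 0` and `ξ ∈ ℝ`,
`∫₀^∞ (1+s)^κ s^{a+1/2} (t²+ξ²t²)^{-(a/2+3/4)} exp(-s/(4t(1+ξ²))) ds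
  ≤ C (1+t)^κ (1+ξ²)^{a/2+κ+3/4}`. -/
theorem wave_propagator_integral_estimate (a κ : ℝ) (ha : 0 < a) (hκ : 0 ≤ κ) :
    ∃ C > 0, ∀ t > (0 : ℝ), ∀ ξ : ℝ,
      (∫ s in Set.Ioi (0 : ℝ),
          (1 + s) ^ κ * s ^ (a + 1 / 2) * (t ^ 2 + ξ ^ 2 * t ^ 2) ^ (-(a / 2 + 3 / 4))
            * Real.exp (-s / (4 * t * (1 + ξ ^ 2))))
        ≤ C * (1 + t) ^ κ * (1 + ξ ^ 2) ^ (a / 2 + κ + 3 / 4) := by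
  set N : ℕ := ⌈κ⌉₊ + 1 with hNdef
  have hN0 : (0 : ℝ) < (N : ℝ) := by exact_mod_cast Nat.succ_pos _
  have hκN : κ ≤ (N : ℝ) := le_trans (Nat.le_ceil κ) (by exact_mod_cast Nat.le_succ _)
  have hΓ : 0 < Real.Gamma (a + 3 / 2) := Real.Gamma_pos_of_pos (by linarith)
  refine ⟨(4 * (N : ℝ)) ^ N * Real.exp (1 / 4) * Real.Gamma (a + 3 / 2)
      * (16 / 3 : ℝ) ^ (a + 3 / 2) * (4 : ℝ) ^ κ, by positivity, ?_⟩
  intro t ht ξ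
  set E : ℝ := 1 + ξ ^ 2 with hEdef
  have hE : (1 : ℝ) ≤ E := by nlinarith [sq_nonneg ξ]
  have hE0 : (0 : ℝ) < E := lt_of_lt_of_le one_pos hE
  set b : ℝ := 4 * t * E with hbdef
  have hb : 0 < b := by positivity
  set c : ℝ := 3 / (4 * b) with hcdef
  have hc : 0 < c := by positivity
  set M : ℝ := (t ^ 2 + ξ ^ 2 * t ^ 2) ^ (-(a / 2 + 3 / 4)) with hMdef
  have htξ : 0 < t ^ 2 + ξ ^ 2 * t ^ 2 := by positivity
  have hM : 0 < M := by rw [hMdef]; positivity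
  set K : ℝ := M * (1 + b) ^ κ * ((4 * (N : ℝ)) ^ N * Real.exp (1 / 4)) with hKdef
  have hK : 0 ≤ K := by
    rw [hKdef]
    have h1b : (0:ℝ) < 1 + b := by linarith
    positivity
  -- integrability of the majorant
  have hg_int : IntegrableOn (fun s : ℝ => K * (s ^ (a + 1 / 2) * Real.exp (-(c * s))))
      (Set.Ioi 0) := by
    have h := integrableOn_rpow_mul_exp_neg_mul_rpow (p := 1) (s := a + 1 / 2) (b := c)
      (by linarith) zero_lt_one hc
    have h' : IntegrableOn (fun s : ℝ => s ^ (a + 1 / 2) * Real.exp (-(c * s)))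
        (Set.Ioi 0) := by
      simpa [Real.rpow_one, neg_mul] using h
    exact h'.const_mul K
  -- pointwise bound on Ioi 0
  have hpt : ∀ s ∈ Set.Ioi (0 : ℝ),
      (1 + s) ^ κ * s ^ (a + 1 / 2) * M * Real.exp (-s / b)
        ≤ K * (s ^ (a + 1 / 2) * Real.exp (-(c * s))) := by
    intro s hs
    have hs0 : 0 < s := hs
    have h1 : (1 + s) ^ κ ≤ (1 + b) ^ κ * (1 + s / b) ^ κ := by
      have hxy : ((1 + b) * (1 + s / b)) ^ κ = (1 + b) ^ κ * (1 + s / b) ^ κ :=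
        Real.mul_rpow (by positivity) (by positivity)
      rw [← hxy]
      apply Real.rpow_le_rpow (by linarith) _ hκ
      have hexp : (1 + b) * (1 + s / b) = 1 + s + b + s / b := by
        field_simp; ring
      have hsb : 0 ≤ s / b := by positivity
      linarith [hexp]
    have h2 : (1 + s / b) ^ κ ≤ (1 + s / b) ^ (N : ℝ) :=
      Real.rpow_le_rpow_of_exponent_le
        (by
          have hsb : 0 ≤ s / b := by positivity
          linarith) hκN
    have h3 : (1 + s / b) ^ (N : ℕ) ≤ (4 * (N : ℝ)) ^ N
        * (Real.exp (1 / 4) * Real.exp (s / (4 * b))) := by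
      have key : 1 + s / b ≤ 4 * (N : ℝ) * Real.exp ((1 + s / b) / (4 * N)) := by
        have hu : (1 + s / b) / (4 * N) ≤ Real.exp ((1 + s / b) / (4 * N)) := by
          linarith [Real.add_one_le_exp ((1 + s / b) / (4 * (N:ℝ)))]
        calc 1 + s / b = 4 * (N : ℝ) * ((1 + s / b) / (4 * N)) := by field_simp
          _ ≤ 4 * (N : ℝ) * Real.exp ((1 + s / b) / (4 * N)) := by
              apply mul_le_mul_of_nonneg_left hu (by positivity)
      calc (1 + s / b) ^ (N : ℕ)
          ≤ (4 * (N : ℝ) * Real.exp ((1 + s / b) / (4 * N))) ^ (N : ℕ) :=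
            pow_le_pow_left₀ (by positivity) key N
        _ = (4 * (N : ℝ)) ^ N * Real.exp ((N : ℝ) * ((1 + s / b) / (4 * N))) := by
            rw [mul_pow, Real.exp_nat_mul]
        _ = (4 * (N : ℝ)) ^ N * Real.exp ((1 + s / b) / 4) := by
            rw [show (N : ℝ) * ((1 + s / b) / (4 * N)) = (1 + s / b) / 4 from by
              field_simp]
        _ = (4 * (N : ℝ)) ^ N * (Real.exp (1 / 4) * Real.exp (s / (4 * b))) := by
            rw [← Real.exp_add, add_div, div_div, mul_comm b 4]
    have hA : (1 + s) ^ κ ≤ (1 + b) ^ κ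
        * ((4 * (N : ℝ)) ^ N * (Real.exp (1 / 4) * Real.exp (s / (4 * b)))) := by
      calc (1 + s) ^ κ ≤ (1 + b) ^ κ * (1 + s / b) ^ κ := h1
        _ ≤ (1 + b) ^ κ * ((4 * (N : ℝ)) ^ N
            * (Real.exp (1 / 4) * Real.exp (s / (4 * b)))) := by
            apply mul_le_mul_of_nonneg_left _ (by positivity)
            calc (1 + s / b) ^ κ ≤ (1 + s / b) ^ (N : ℝ) := h2
              _ = (1 + s / b) ^ (N : ℕ) := Real.rpow_natCast _ N
              _ ≤ _ := h3
    have h4 : Real.exp (s / (4 * b)) * Real.exp (-s / b) = Real.exp (-(c * s)) := by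
      rw [← Real.exp_add]
      congr 1
      rw [hcdef]
      field_simp
      ring
    calc (1 + s) ^ κ * s ^ (a + 1 / 2) * M * Real.exp (-s / b)
        = (M * s ^ (a + 1 / 2)) * ((1 + s) ^ κ * Real.exp (-s / b)) := by ring
      _ ≤ (M * s ^ (a + 1 / 2)) * (((1 + b) ^ κ * ((4 * (N : ℝ)) ^ N
            * (Real.exp (1 / 4) * Real.exp (s / (4 * b))))) * Real.exp (-s / b)) := by
          apply mul_le_mul_of_nonneg_left
            (mul_le_mul_of_nonneg_right hA (Real.exp_nonneg _)) (by positivity)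
      _ = (M * (1 + b) ^ κ * ((4 * (N : ℝ)) ^ N * Real.exp (1 / 4)) * s ^ (a + 1 / 2))
            * (Real.exp (s / (4 * b)) * Real.exp (-s / b)) := by ring
      _ = K * (s ^ (a + 1 / 2) * Real.exp (-(c * s))) := by rw [h4, hKdef]; ring
  -- compare integrals
  have hmono : (∫ s in Set.Ioi (0 : ℝ),
      (1 + s) ^ κ * s ^ (a + 1 / 2) * M * Real.exp (-s / b))
      ≤ ∫ s in Set.Ioi (0 : ℝ), K * (s ^ (a + 1 / 2) * Real.exp (-(c * s))) := by
    apply integral_mono_of_nonneg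
    · exact ae_restrict_of_forall_mem measurableSet_Ioi fun s hs => by
        have hs0 : (0:ℝ) < s := hs
        positivity
    · exact hg_int
    · exact ae_restrict_of_forall_mem measurableSet_Ioi hpt
  -- evaluate the majorant integral
  have hval : (∫ s in Set.Ioi (0 : ℝ), K * (s ^ (a + 1 / 2) * Real.exp (-(c * s))))
      = K * ((1 / c) ^ (a + 3 / 2) * Real.Gamma (a + 3 / 2)) := by
    rw [MeasureTheory.integral_const_mul]
    congr 1
    have h := Real.integral_rpow_mul_exp_neg_mul_Ioi
      (a := a + 3 / 2) (r := c) (by linarith) hc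
    rw [show a + 1 / 2 = a + 3 / 2 - 1 by ring]
    exact h
  -- arithmetic of the constants
  have h1c : 1 / c = 16 / 3 * (t * E) := by
    rw [hcdef, hbdef]; field_simp; ring
  have e1 : M = t ^ (-(a + 3 / 2)) * E ^ (-(a / 2 + 3 / 4)) := by
    rw [hMdef, show t ^ 2 + ξ ^ 2 * t ^ 2 = t ^ 2 * E by rw [hEdef]; ring,
      Real.mul_rpow (by positivity) hE0.le]
    congr 1
    rw [← Real.rpow_natCast t 2, ← Real.rpow_mul ht.le,
      show ((2 : ℕ) : ℝ) * -(a / 2 + 3 / 4) = -(a + 3 / 2) by push_cast; ring]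
  have e2 : (1 / c) ^ (a + 3 / 2)
      = (16 / 3 : ℝ) ^ (a + 3 / 2) * (t ^ (a + 3 / 2) * E ^ (a + 3 / 2)) := by
    rw [h1c, Real.mul_rpow (by norm_num) (by positivity), Real.mul_rpow ht.le hE0.le]
  have e3 : (1 + b) ^ κ ≤ (4 : ℝ) ^ κ * ((1 + t) ^ κ * E ^ κ) := by
    rw [← Real.mul_rpow (by linarith) hE0.le, ← Real.mul_rpow (by norm_num) (by positivity)]
    apply Real.rpow_le_rpow (by linarith) _ hκ
    rw [hbdef]; nlinarith
  have et : t ^ (-(a + 3 / 2)) * t ^ (a + 3 / 2) = 1 := by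
    rw [← Real.rpow_add ht, show -(a + 3 / 2) + (a + 3 / 2) = 0 by ring, Real.rpow_zero]
  calc (∫ s in Set.Ioi (0 : ℝ),
        (1 + s) ^ κ * s ^ (a + 1 / 2) * M * Real.exp (-s / b))
      ≤ K * ((1 / c) ^ (a + 3 / 2) * Real.Gamma (a + 3 / 2)) := hval ▸ hmono
    _ = ((4 * (N : ℝ)) ^ N * Real.exp (1 / 4) * Real.Gamma (a + 3 / 2)
          * (16 / 3 : ℝ) ^ (a + 3 / 2))
          * ((t ^ (-(a + 3 / 2)) * t ^ (a + 3 / 2))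
            * (E ^ (-(a / 2 + 3 / 4)) * E ^ (a + 3 / 2))) * (1 + b) ^ κ := by
        rw [hKdef, e1, e2]; ring
    _ = ((4 * (N : ℝ)) ^ N * Real.exp (1 / 4) * Real.Gamma (a + 3 / 2)
          * (16 / 3 : ℝ) ^ (a + 3 / 2)) * E ^ (a / 2 + 3 / 4) * (1 + b) ^ κ := by
        rw [et, ← Real.rpow_add hE0,
          show -(a / 2 + 3 / 4) + (a + 3 / 2) = a / 2 + 3 / 4 by ring]
        ring
    _ ≤ ((4 * (N : ℝ)) ^ N * Real.exp (1 / 4) * Real.Gamma (a + 3 / 2)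
          * (16 / 3 : ℝ) ^ (a + 3 / 2)) * E ^ (a / 2 + 3 / 4)
          * ((4 : ℝ) ^ κ * ((1 + t) ^ κ * E ^ κ)) := by
        apply mul_le_mul_of_nonneg_left e3 (by positivity)
    _ = (4 * (N : ℝ)) ^ N * Real.exp (1 / 4) * Real.Gamma (a + 3 / 2)
          * (16 / 3 : ℝ) ^ (a + 3 / 2) * (4 : ℝ) ^ κ * (1 + t) ^ κ
          * (E ^ (a / 2 + 3 / 4) * E ^ κ) := by ring
    _ = (4 * (N : ℝ)) ^ N * Real.exp (1 / 4) * Real.Gamma (a + 3 / 2)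
          * (16 / 3 : ℝ) ^ (a + 3 / 2) * (4 : ℝ) ^ κ * (1 + t) ^ κ
          * E ^ (a / 2 + κ + 3 / 4) := by
        rw [← Real.rpow_add hE0, show a / 2 + 3 / 4 + κ = a / 2 + κ + 3 / 4 by ring]
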